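/- For every M ∈ ℕ ∪ {0} there exists a one-sided shift space over an infinite alphabet that is an (M+1)-step shift space and is not conjugate to any M-step shift space. -/

import Mathlib

open Set Filter Topology
/-- Elements of the full shift `Σ_A`: `Option`-valued sequences that stay `none`
once they are `none` (so they are either everywhere-defined infinite sequences,
or finite words followed by `none`s; the empty word is the all-`none` sequence). -/
def IsWordFun {A : Type*} (x : ℕ → Option A) : Prop :=
  ∀ m n : ℕ, m ≤ n → x m = none → x n = none

/-- The full shift `Σ_A = A^ℕ ∪ {finite words over A}`. -/
def FullShift (A : Type*) : Type _ := {x : ℕ → Option A // IsWordFun x}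

namespace FullShift

variable {A B : Type*}

/-- The length of an element of the full shift, in `ℕ∞`. -/
noncomputable def len (x : FullShift A) : ℕ∞ :=
  sInf {n : ℕ∞ | ∃ m : ℕ, n = (m : ℕ∞) ∧ x.1 m = none}

/-- The shift map `σ`, deleting the first letter. -/
def shift (x : FullShift A) : FullShift A :=
  ⟨fun n => x.1 (n + 1), fun m n h hm => x.2 (m + 1) (n + 1) (by omega) hm⟩

/-- The empty word `∅`. -/
def emptyWord : FullShift A := ⟨fun _ => none, fun _ _ _ _ => rfl⟩

/-- The finite word determined by a list. -/
def word (l : List A) : FullShift A :=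
  ⟨fun n => l[n]?, by
    intro m n h hm
    rw [List.getElem?_eq_none_iff] at hm ⊢
    omega⟩

/-- The infinite sequence determined by a function `ℕ → A`. -/
def infSeq (g : ℕ → A) : FullShift A :=
  ⟨fun n => some (g n), by intro m n _ hm; simp at hm⟩

/-- Generalized cylinder set `Z(w, F)`: elements beginning with the finite word `w`
whose next letter, if any, does not lie in the finite set `F`. -/
def Cyl (w : List A) (F : Finset A) : Set (FullShift A) :=
  {y | (∀ i < w.length, y.1 i = w[i]?) ∧ ∀ a ∈ F, y.1 w.length ≠ some a}

/-- The topology on `Σ_A` generated by the generalized cylinder sets. -/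
instance : TopologicalSpace (FullShift A) :=
  TopologicalSpace.generateFrom {S | ∃ (w : List A) (F : Finset A), S = Cyl w F}

/-- A shift space: closed, shift-invariant, with the infinite-extension property. -/
def IsShiftSpace (Λ : Set (FullShift A)) : Prop :=
  IsClosed Λ ∧ (∀ x ∈ Λ, shift x ∈ Λ) ∧
    ∀ x ∈ Λ, ∀ n : ℕ, len x = (n : ℕ∞) →
      {a : A | ∃ z ∈ Λ, (∀ i < n, z.1 i = x.1 i) ∧ z.1 n = some a}.Infinite

/-- `u` occurs as a subblock of `x`. -/
def Occurs (u : List A) (x : FullShift A) : Prop :=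
  ∃ i : ℕ, ∀ j < u.length, x.1 (i + j) = u[j]?

/-- The infinite sequences avoiding every word in `Fb` as a subblock. -/
def XinfL (Fb : Set (List A)) : Set (FullShift A) :=
  {x | (∀ n, x.1 n ≠ none) ∧ ∀ u ∈ Fb, ¬ Occurs u x}

/-- The shift space `X_F` determined by the forbidden words `Fb`: the infinite
sequences avoiding `Fb`, together with the finite words `x` such that for
infinitely many `a ∈ A` some extension `x a y` lies in `X_F^inf`. -/
def XL (Fb : Set (List A)) : Set (FullShift A) :=
  XinfL Fb ∪ {x | ∃ n : ℕ, len x = (n : ℕ∞) ∧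
    {a : A | ∃ z ∈ XinfL Fb, (∀ i < n, z.1 i = x.1 i) ∧ z.1 n = some a}.Infinite}

/-- The infinite sequences all of whose length-`N` windows `v` satisfy `ft v = true`
(i.e. avoiding all length-`N` words `w` with `ft w = 0`). -/
def XinfT {N : ℕ} (ft : (Fin N → A) → Bool) : Set (FullShift A) :=
  {x | (∀ n, x.1 n ≠ none) ∧
    ∀ (i : ℕ) (v : Fin N → A), (∀ j : Fin N, x.1 (i + (j : ℕ)) = some (v j)) → ft v = true}

/-- The shift space `X_f` determined by forbidding the length-`N` words `w`
with `ft w = 0`. -/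
def XT {N : ℕ} (ft : (Fin N → A) → Bool) : Set (FullShift A) :=
  XinfT ft ∪ {x | ∃ n : ℕ, len x = (n : ℕ∞) ∧
    {a : A | ∃ z ∈ XinfT ft, (∀ i < n, z.1 i = x.1 i) ∧ z.1 n = some a}.Infinite}

/-- `Y` is an `M`-step shift space: determined by forbidden words of length `M + 1`,
equivalently by a function `g̃ : B^{M+1} → {0,1}`. -/
def IsStepShift (M : ℕ) (Y : Set (FullShift B)) : Prop :=
  ∃ gt : (Fin (M + 1) → B) → Bool, Y = XT gt

/-- `φ` is a conjugacy from `Λ` onto `Y`: bijective, continuous, shift-commuting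
and length-preserving. -/
def IsConjugacy (Λ : Set (FullShift A)) (Y : Set (FullShift B))
    (φ : FullShift A → FullShift B) : Prop :=
  Set.BijOn φ Λ Y ∧ ContinuousOn φ Λ ∧
    (∀ x ∈ Λ, φ (shift x) = shift (φ x)) ∧ ∀ x ∈ Λ, len (φ x) = len x

/-- `Λ` and `Y` are conjugate shift spaces. -/
def Conjugate (Λ : Set (FullShift A)) (Y : Set (FullShift B)) : Prop :=
  ∃ φ : FullShift A → FullShift B, IsConjugacy Λ Y φ

/-- The periodic sequence `(x_1 ⋯ x_M b)^∞` of period `M + 1`. -/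
def per (M : ℕ) (x : Fin M → A) (b : A) : ℕ → A :=
  fun n => if h : n % (M + 1) < M then x ⟨n % (M + 1), h⟩ else b

end FullShift


namespace FullShift

variable {A B : Type*}

/-! ### Auxiliary lemmas -/

lemma shift_iter_apply (x : FullShift A) (k n : ℕ) : (shift^[k] x).1 n = x.1 (n + k) := by
  induction k generalizing x n with
  | zero => rfl
  | succ k ih =>
    rw [Function.iterate_succ_apply]
    rw [ih (shift x) n]
    show x.1 (n + k + 1) = x.1 (n + (k + 1))
    congr 1

lemma len_eq_top (x : FullShift A) (h : ∀ n, x.1 n ≠ none) : len x = ⊤ := by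
  have : {n : ℕ∞ | ∃ m : ℕ, n = (m : ℕ∞) ∧ x.1 m = none} = ∅ := by
    ext n; simp only [Set.mem_setOf_eq, Set.mem_empty_iff_false, iff_false, not_exists]
    rintro m ⟨rfl, hm⟩; exact h m hm
  rw [len, this, sInf_empty]

lemma apply_ne_none_of_len_top (x : FullShift A) (h : len x = ⊤) (n : ℕ) : x.1 n ≠ none := by
  intro hn
  have h1 : len x ≤ (n : ℕ∞) := sInf_le ⟨n, rfl, hn⟩
  rw [h, top_le_iff] at h1
  exact ENat.coe_ne_top n h1

lemma len_eq_coe (x : FullShift A) (n : ℕ) (h1 : x.1 n = none) (h2 : ∀ m < n, x.1 m ≠ none) :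
    len x = (n : ℕ∞) := by
  refine le_antisymm (sInf_le ⟨n, rfl, h1⟩) (le_sInf ?_)
  rintro k ⟨m, rfl, hm⟩
  rcases le_or_gt n m with h | h
  · exact_mod_cast h
  · exact absurd hm (h2 m h)

lemma of_len_coe (x : FullShift A) (n : ℕ) (h : len x = (n : ℕ∞)) :
    x.1 n = none ∧ ∀ m < n, x.1 m ≠ none := by
  constructor
  · by_contra hM
    have h3 : (((n + 1 : ℕ)) : ℕ∞) ≤ len x := by
      refine le_sInf ?_
      rintro k ⟨m, rfl, hm⟩
      have hnm : n < m := by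
        rcases le_or_gt m n with h' | h'
        · exact absurd (x.2 m n h' hm) hM
        · exact h'
      exact_mod_cast hnm
    rw [h] at h3
    have : n + 1 ≤ n := by exact_mod_cast h3
    omega
  · intro m hm hnone
    have h1 : len x ≤ (m : ℕ∞) := sInf_le ⟨m, rfl, hnone⟩
    rw [h] at h1
    exact absurd (by exact_mod_cast h1) (not_le.2 hm)

lemma shift_mem_XinfT {N : ℕ} (ft : (Fin N → A) → Bool) (x : FullShift A)
    (hx : x ∈ XinfT ft) : shift x ∈ XinfT ft := by
  refine ⟨fun n => hx.1 (n + 1), fun i v hv => hx.2 (i + 1) v fun j => ?_⟩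
  have := hv j
  show x.1 (i + 1 + (j : ℕ)) = some (v j)
  rw [show i + 1 + (j : ℕ) = i + (j : ℕ) + 1 from by omega]
  exact this

lemma shift_iter_mem_XinfT {N : ℕ} (ft : (Fin N → A) → Bool) (x : FullShift A)
    (hx : x ∈ XinfT ft) (k : ℕ) : shift^[k] x ∈ XinfT ft := by
  induction k with
  | zero => exact hx
  | succ k ih => rw [Function.iterate_succ_apply']; exact shift_mem_XinfT ft _ ih

end FullShift

namespace FullShift

lemma per_zero {M : ℕ} (b n : ℕ) :
    per M (fun _ => (0 : ℕ)) b n = if n % (M + 1) < M then 0 else b := by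
  by_cases h : n % (M + 1) < M <;> simp [per, h]

lemma per_zero_add {M : ℕ} (b n : ℕ) :
    per M (fun _ => (0 : ℕ)) b (n + (M + 1)) = per M (fun _ => (0 : ℕ)) b n := by
  rw [per_zero, per_zero, Nat.add_mod_right]

lemma per_zero_lt {M : ℕ} (b i : ℕ) (h : i < M) : per M (fun _ => (0 : ℕ)) b i = 0 := by
  rw [per_zero, if_pos]
  rwa [Nat.mod_eq_of_lt (by omega)]

lemma per_zero_M {M : ℕ} (b : ℕ) : per M (fun _ => (0 : ℕ)) b M = b := by
  rw [per_zero, if_neg]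
  rw [Nat.mod_eq_of_lt (by omega)]
  omega

open Classical in
/-- Allowed `(M+2)`-windows: windows of the periodic sequences `(0^M b)^∞`. -/
noncomputable def gtM (M : ℕ) : (Fin (M + 1 + 1) → ℕ) → Bool :=
  fun v => decide (∃ s b : ℕ, ∀ j : Fin (M + 1 + 1),
    v j = per M (fun _ => 0) b (s + (j : ℕ)))

lemma gtM_iff {M : ℕ} (v : Fin (M + 1 + 1) → ℕ) :
    gtM M v = true ↔ ∃ s b : ℕ, ∀ j : Fin (M + 1 + 1),
      v j = per M (fun _ => 0) b (s + (j : ℕ)) := by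
  simp [gtM]

lemma per_mem_XinfT {M : ℕ} (b : ℕ) :
    infSeq (per M (fun _ => 0) b) ∈ XinfT (gtM M) := by
  refine ⟨fun n => by simp [infSeq], fun i v hv => ?_⟩
  rw [gtM_iff]
  refine ⟨i, b, fun j => ?_⟩
  have := hv j
  simp only [infSeq, Option.some_inj] at this
  exact this.symm

lemma periodic_of_mem_XinfT {M : ℕ} (x : FullShift ℕ) (hx : x ∈ XinfT (gtM M)) :
    ∀ n, x.1 (n + (M + 1)) = x.1 n := by
  intro n
  set v : Fin (M + 1 + 1) → ℕ :=
    fun j => (x.1 (n + (j : ℕ))).get (Option.ne_none_iff_isSome.1 (hx.1 _)) with hvdef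
  have hv : ∀ j : Fin (M + 1 + 1), x.1 (n + (j : ℕ)) = some (v j) :=
    fun j => (Option.some_get _).symm
  obtain ⟨s, b, hsb⟩ := (gtM_iff v).1 (hx.2 n v hv)
  have e1 : x.1 (n + (M + 1)) = some (v ⟨M + 1, by omega⟩) := hv ⟨M + 1, by omega⟩
  have e0 : x.1 n = some (v ⟨0, by omega⟩) := hv ⟨0, by omega⟩
  rw [e1, e0, hsb ⟨M + 1, by omega⟩, hsb ⟨0, by omega⟩]
  show some (per M (fun _ => 0) b (s + (M + 1))) = some (per M (fun _ => 0) b (s + 0))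
  rw [per_zero_add, Nat.add_zero]

lemma shift_iter_fix_of_mem_XinfT {M : ℕ} (x : FullShift ℕ) (hx : x ∈ XinfT (gtM M)) :
    shift^[M + 1] x = x := by
  refine Subtype.ext (funext fun n => ?_)
  rw [shift_iter_apply]
  exact periodic_of_mem_XinfT x hx n

/-- Core amalgamation lemma: in an `M`-step shift, two distinct `(M+1)`-periodic
points sharing their first `M` letters can be interleaved into a non-`(M+1)`-periodic
point. -/
lemma core {B : Type*} {M : ℕ} (gtY : (Fin (M + 1) → B) → Bool) (y1 y2 : FullShift B)
    (h1 : y1 ∈ XinfT gtY) (h2 : y2 ∈ XinfT gtY)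
    (hp1 : ∀ n, y1.1 (n + (M + 1)) = y1.1 n) (hp2 : ∀ n, y2.1 (n + (M + 1)) = y2.1 n)
    (hag : ∀ i < M, y1.1 i = y2.1 i) (hne : y1 ≠ y2) :
    ∃ z : FullShift B, z ∈ XinfT gtY ∧ z.1 (M + (M + 1)) ≠ z.1 M ∧ ∀ n, z.1 n ≠ none := by
  set f1 : ℕ → B := fun n => (y1.1 n).get (Option.ne_none_iff_isSome.1 (h1.1 n)) with hf1def
  set f2 : ℕ → B := fun n => (y2.1 n).get (Option.ne_none_iff_isSome.1 (h2.1 n)) with hf2def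
  have hf1 : ∀ n, y1.1 n = some (f1 n) := fun n => (Option.some_get _).symm
  have hf2 : ∀ n, y2.1 n = some (f2 n) := fun n => (Option.some_get _).symm
  have hper1 : ∀ n, f1 (n + (M + 1)) = f1 n := fun n => by
    have := hp1 n; rw [hf1, hf1] at this; exact Option.some_injective _ this
  have hper2 : ∀ n, f2 (n + (M + 1)) = f2 n := fun n => by
    have := hp2 n; rw [hf2, hf2] at this; exact Option.some_injective _ this
  have hmul1 : ∀ k r, f1 ((M + 1) * k + r) = f1 r := by
    intro k
    induction k with
    | zero => intro r; simp
    | succ k ih =>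
      intro r
      rw [show (M + 1) * (k + 1) + r = ((M + 1) * k + r) + (M + 1) from by ring, hper1, ih]
  have hmul2 : ∀ k r, f2 ((M + 1) * k + r) = f2 r := by
    intro k
    induction k with
    | zero => intro r; simp
    | succ k ih =>
      intro r
      rw [show (M + 1) * (k + 1) + r = ((M + 1) * k + r) + (M + 1) from by ring, hper2, ih]
  have hmod1 : ∀ n, f1 n = f1 (n % (M + 1)) := fun n => by
    conv_lhs => rw [← Nat.div_add_mod n (M + 1)]
    rw [hmul1]
  have hmod2 : ∀ n, f2 n = f2 (n % (M + 1)) := fun n => by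
    conv_lhs => rw [← Nat.div_add_mod n (M + 1)]
    rw [hmul2]
  have hagree : ∀ n, n % (M + 1) < M → f1 n = f2 n := by
    intro n h
    rw [hmod1, hmod2]
    have := hag (n % (M + 1)) h
    rw [hf1, hf2] at this
    exact Option.some_injective _ this
  have hM1 : f1 M ≠ f2 M := by
    intro hEq
    apply hne
    refine Subtype.ext (funext fun n => ?_)
    rw [hf1, hf2]
    congr 1
    have hr : n % (M + 1) < M + 1 := Nat.mod_lt _ (Nat.succ_pos M)
    rcases lt_or_eq_of_le (Nat.lt_succ_iff.1 hr) with h | h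
    · exact hagree n h
    · rw [hmod1, hmod2, h, hEq]
  set g : ℕ → B := fun n => if (n / (M + 1)) % 2 = 0 then f1 n else f2 n with hgdef
  have hgM : g M = f1 M := by
    rw [hgdef]
    simp only
    rw [Nat.div_eq_of_lt (by omega)]
    norm_num
  have hgM' : g (M + (M + 1)) = f2 M := by
    rw [hgdef]
    simp only
    rw [Nat.add_div_right _ (by omega : 0 < M + 1), Nat.div_eq_of_lt (by omega)]
    norm_num
    exact hper2 M
  refine ⟨infSeq g, ⟨fun n => by simp [infSeq], ?_⟩, ?_, fun n => by simp [infSeq]⟩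
  · -- window condition
    intro i v hv
    have hvj : ∀ j : Fin (M + 1), v j = g (i + (j : ℕ)) := by
      intro j
      have := hv j
      simp only [infSeq, Option.some_inj] at this
      exact this.symm
    -- the unique position in the window congruent to M mod (M+1)
    set r := i % (M + 1) with hrdef
    have hr : r < M + 1 := Nat.mod_lt _ (Nat.succ_pos M)
    set js : ℕ := M - r with hjsdef
    have hjs : js ≤ M := Nat.sub_le _ _
    obtain ⟨q, hq⟩ : ∃ q, i = (M + 1) * q + r := ⟨i / (M + 1), (Nat.div_add_mod i (M + 1)).symm⟩
    have hsplit : i + js = (M + 1) * q + M := by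
      rw [hq]; omega
    have hmodstar : (i + js) % (M + 1) = M := by
      rw [hsplit, Nat.mul_add_mod, Nat.mod_eq_of_lt (by omega)]
    have huniq : ∀ j ≤ M, (i + j) % (M + 1) = M → j = js := by
      intro j hj hmodj
      have hcong : j ≡ js [MOD M + 1] :=
        Nat.ModEq.add_left_cancel' i (by rw [Nat.ModEq, hmodj, hmodstar])
      have := hcong
      rw [Nat.ModEq, Nat.mod_eq_of_lt (by omega), Nat.mod_eq_of_lt (by omega)] at this
      exact this
    rcases Nat.mod_two_eq_zero_or_one ((i + js) / (M + 1)) with hpar | hpar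
    · -- window comes from y1
      refine h1.2 i v fun j => ?_
      rw [hf1, hvj j]
      congr 1
      by_cases hj : (i + (j : ℕ)) % (M + 1) = M
      · have hjj : (j : ℕ) = js := huniq _ (Nat.lt_succ_iff.1 j.2) hj
        rw [hgdef]
        simp only
        rw [hjj, if_pos hpar]
      · have hlt : (i + (j : ℕ)) % (M + 1) < M := by
          have : (i + (j : ℕ)) % (M + 1) < M + 1 := Nat.mod_lt _ (Nat.succ_pos M)
          omega
        rw [hgdef]
        simp only
        split
        · rfl
        · exact hagree _ hlt
    · -- window comes from y2
      refine h2.2 i v fun j => ?_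
      rw [hf2, hvj j]
      congr 1
      by_cases hj : (i + (j : ℕ)) % (M + 1) = M
      · have hjj : (j : ℕ) = js := huniq _ (Nat.lt_succ_iff.1 j.2) hj
        rw [hgdef]
        simp only
        rw [hjj, if_neg (by omega)]
      · have hlt : (i + (j : ℕ)) % (M + 1) < M := by
          have : (i + (j : ℕ)) % (M + 1) < M + 1 := Nat.mod_lt _ (Nat.succ_pos M)
          omega
        rw [hgdef]
        simp only
        split
        · exact (hagree _ hlt).symm
        · rfl
  · -- not (M+1)-periodic
    simp only [infSeq, ne_eq, Option.some_inj]
    rw [hgM, hgM']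
    exact fun h => hM1 h.symm

end FullShift

namespace FullShift

lemma w0_apply {M : ℕ} (i : ℕ) :
    (word (List.replicate M (0 : ℕ))).1 i = if i < M then some 0 else none := by
  show (List.replicate M (0 : ℕ))[i]? = _
  rw [List.getElem?_replicate]

lemma len_w0 {M : ℕ} : len (word (List.replicate M (0 : ℕ))) = (M : ℕ∞) := by
  refine len_eq_coe _ _ ?_ ?_
  · rw [w0_apply, if_neg (by omega)]
  · intro m hm
    rw [w0_apply, if_pos hm]
    simp

lemma w0_mem_XT {M : ℕ} : word (List.replicate M (0 : ℕ)) ∈ XT (gtM M) := by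
  refine Or.inr ⟨M, len_w0, ?_⟩
  have : {a : ℕ | ∃ z ∈ XinfT (gtM M),
      (∀ i < M, z.1 i = (word (List.replicate M (0 : ℕ))).1 i) ∧ z.1 M = some a} = Set.univ := by
    refine Set.eq_univ_of_forall fun a => ?_
    refine ⟨infSeq (per M (fun _ => 0) a), per_mem_XinfT a, fun i hi => ?_, ?_⟩
    · show some (per M (fun _ => 0) a i) = _
      rw [per_zero_lt a i hi, w0_apply, if_pos hi]
    · show some (per M (fun _ => 0) a M) = some a
      rw [per_zero_M]
  rw [this]
  exact Set.infinite_univ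

lemma tendsto_p (M : ℕ) :
    Tendsto (fun b : ℕ => infSeq (per M (fun _ => 0) b)) atTop
      (𝓝[XT (gtM M)] (word (List.replicate M (0 : ℕ)))) := by
  rw [tendsto_nhdsWithin_iff]
  constructor
  · have hnh : (𝓝 (word (List.replicate M (0 : ℕ))) : Filter (FullShift ℕ)) =
        ⨅ s ∈ {s | word (List.replicate M (0 : ℕ)) ∈ s ∧
          s ∈ {S | ∃ (w : List ℕ) (F : Finset ℕ), S = Cyl w F}}, 𝓟 s :=
      TopologicalSpace.nhds_generateFrom
    rw [hnh]
    refine tendsto_iInf.2 fun s => tendsto_iInf.2 fun hs => tendsto_principal.2 ?_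
    obtain ⟨hmem, w, F, rfl⟩ := hs
    have hL : w.length ≤ M := by
      by_contra hL
      have h1 := hmem.1 M (by omega)
      rw [w0_apply, if_neg (by omega)] at h1
      rw [List.getElem?_eq_getElem (by omega)] at h1
      cases h1
    have hfirst : ∀ b : ℕ, ∀ i < w.length,
        (infSeq (per M (fun _ => 0) b)).1 i = w[i]? := by
      intro b i hi
      rw [← hmem.1 i hi, w0_apply, if_pos (by omega)]
      show some (per M (fun _ => 0) b i) = some 0
      rw [per_zero_lt b i (by omega)]
    rcases lt_or_eq_of_le hL with hlt | heq
    · refine Eventually.of_forall fun b => ⟨hfirst b, fun a ha hcontra => ?_⟩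
      have h2 := hmem.2 a ha
      rw [w0_apply, if_pos hlt] at h2
      apply h2
      have hc : some (per M (fun _ => 0) b w.length) = some a := hcontra
      rwa [per_zero_lt b _ hlt] at hc
    · have hF : ∀ᶠ b : ℕ in atTop, b ∉ (F : Set ℕ) := by
        rw [← Nat.cofinite_eq_atTop]
        exact F.finite_toSet.eventually_cofinite_notMem
      filter_upwards [hF] with b hb
      refine ⟨hfirst b, fun a ha hcontra => ?_⟩
      rw [heq] at hcontra
      have hc : some (per M (fun _ => 0) b M) = some a := hcontra
      rw [per_zero_M] at hc
      exact hb (by rw [Option.some_inj] at hc; rw [hc]; exact ha)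
  · exact Eventually.of_forall fun b => Or.inl (per_mem_XinfT b)

lemma phi_iter {B : Type*} {M : ℕ} (φ : FullShift ℕ → FullShift B)
    (hcomm : ∀ x ∈ XT (gtM M), φ (shift x) = shift (φ x))
    (x : FullShift ℕ) (hx : x ∈ XinfT (gtM M)) (k : ℕ) :
    φ (shift^[k] x) = shift^[k] (φ x) := by
  induction k with
  | zero => rfl
  | succ k ih =>
    rw [Function.iterate_succ_apply', Function.iterate_succ_apply',
      hcomm _ (Or.inl (shift_iter_mem_XinfT _ _ hx k)), ih]

end FullShift

namespace FullShift

lemma not_conj {B : Type*} {M : ℕ} (gtY : (Fin (M + 1) → B) → Bool) :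
    ¬ Conjugate (XT (gtM M)) (XT gtY) := by
  rintro ⟨φ, hbij, hcont, hcomm, hlen⟩
  set p : ℕ → FullShift ℕ := fun b => infSeq (per M (fun _ => 0) b) with hpdef
  have hpXinf : ∀ b, p b ∈ XinfT (gtM M) := fun b => per_mem_XinfT b
  have hpΛ : ∀ b, p b ∈ XT (gtM M) := fun b => Or.inl (hpXinf b)
  set w0 := word (List.replicate M (0 : ℕ)) with hw0def
  have hw0Λ : w0 ∈ XT (gtM M) := w0_mem_XT
  set u := φ w0 with hudef
  have hlenu : len u = (M : ℕ∞) := by rw [hudef, hlen w0 hw0Λ, hw0def, len_w0]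
  have husome : ∀ i < M, u.1 i ≠ none := (of_len_coe u M hlenu).2
  set c : Fin M → B :=
    fun i => (u.1 i).get (Option.ne_none_iff_isSome.1 (husome i i.2)) with hcdef
  have hc : ∀ i : Fin M, u.1 (i : ℕ) = some (c i) := fun i => (Option.some_get _).symm
  set l := List.ofFn c with hldef
  have hlen_l : l.length = M := List.length_ofFn (f := c)
  have hCylopen : IsOpen (Cyl l (∅ : Finset B)) :=
    TopologicalSpace.isOpen_generateFrom_of_mem ⟨l, ∅, rfl⟩
  have huCyl : u ∈ Cyl l ∅ := by
    constructor
    · intro i hi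
      rw [hlen_l] at hi
      rw [hldef, List.getElem?_ofFn, dif_pos hi]
      exact hc ⟨i, hi⟩
    · simp
  have htend : Tendsto (fun b => φ (p b)) atTop (𝓝 u) :=
    Filter.Tendsto.comp (hcont w0 hw0Λ) (tendsto_p M)
  have hev : ∀ᶠ b in atTop, φ (p b) ∈ Cyl l ∅ := htend (hCylopen.mem_nhds huCyl)
  obtain ⟨b0, hb0⟩ := eventually_atTop.1 hev
  have hyY : ∀ b, φ (p b) ∈ XT gtY := fun b => hbij.mapsTo (hpΛ b)
  have hpn : ∀ b n, (p b).1 n = some (per M (fun _ => 0) b n) := fun b n => rfl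
  have hleny : ∀ b, len (φ (p b)) = ⊤ := fun b => by
    rw [hlen _ (hpΛ b)]
    exact len_eq_top _ (fun n => by rw [hpn b n]; simp)
  have hyinf : ∀ b, φ (p b) ∈ XinfT gtY := by
    intro b
    rcases hyY b with h | ⟨n, hn, _⟩
    · exact h
    · rw [hleny b] at hn
      exact absurd hn (by simp)
  have hfix : ∀ b, shift^[M + 1] (φ (p b)) = φ (p b) := fun b => by
    rw [← phi_iter φ hcomm (p b) (hpXinf b) (M + 1), shift_iter_fix_of_mem_XinfT _ (hpXinf b)]
  have hper : ∀ b n, (φ (p b)).1 (n + (M + 1)) = (φ (p b)).1 n := fun b n => by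
    conv_rhs => rw [← hfix b]
    rw [shift_iter_apply]
  have hag : ∀ i < M, (φ (p b0)).1 i = (φ (p (b0 + 1))).1 i := by
    intro i hi
    have e1 := (hb0 b0 le_rfl).1 i (by rw [hlen_l]; exact hi)
    have e2 := (hb0 (b0 + 1) (by omega)).1 i (by rw [hlen_l]; exact hi)
    rw [e1, e2]
  have hpne : p b0 ≠ p (b0 + 1) := by
    intro h
    have h2 : (p b0).1 M = (p (b0 + 1)).1 M := congrArg (fun x : FullShift ℕ => x.1 M) h
    rw [hpn, hpn, per_zero_M, per_zero_M, Option.some_inj] at h2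
    omega
  have hne : φ (p b0) ≠ φ (p (b0 + 1)) :=
    fun h => hpne (hbij.injOn (hpΛ b0) (hpΛ (b0 + 1)) h)
  obtain ⟨z, hzinf, hzne, hznone⟩ :=
    core gtY _ _ (hyinf b0) (hyinf (b0 + 1)) (hper b0) (hper (b0 + 1)) hag hne
  obtain ⟨w, hwΛ, hφw⟩ := hbij.surjOn (Or.inl hzinf : z ∈ XT gtY)
  have hlenw : len w = ⊤ := by rw [← hlen w hwΛ, hφw]; exact len_eq_top z hznone
  have hwinf : w ∈ XinfT (gtM M) := by
    rcases hwΛ with h | ⟨n, hn, _⟩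
    · exact h
    · rw [hlenw] at hn
      exact absurd hn (by simp)
  have hzfix : shift^[M + 1] z = z := by
    rw [← hφw, ← phi_iter φ hcomm w hwinf (M + 1), shift_iter_fix_of_mem_XinfT _ hwinf]
  apply hzne
  conv_rhs => rw [← hzfix]
  rw [shift_iter_apply]

end FullShift


/-- For every `M`, there is an `(M+1)`-step shift space over an infinite
alphabet that is not conjugate to any `M`-step shift space. -/
theorem stmt16 :
    ∀ M : ℕ, ∃ (A : Type) (_ : Infinite A) (Λ : Set (FullShift A)),
      FullShift.IsStepShift (M + 1) Λ ∧
      ∀ (B : Type) [Infinite B] (Y : Set (FullShift B)),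
        FullShift.IsStepShift M Y → ¬ FullShift.Conjugate Λ Y := by
  intro M
  refine ⟨ℕ, inferInstance, FullShift.XT (FullShift.gtM M), ⟨FullShift.gtM M, rfl⟩, ?_⟩
  rintro B _ Y ⟨gtY, rfl⟩
  exact FullShift.not_conj gtY
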